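/- Fix natural numbers n, d with d ≤ n, let u, v be vertices of Q_n with Hamming distance d, and let M_{n,l,d} denote the number of walks of length l from u to v in Q_n. Then for every real x, the series Σ_{l=0}^{∞} M_{n,l,d} · x^l / l! converges absolutely and Σ_{l=0}^{∞} M_{n,l,d} · x^l / l! = sinh(x)^d · cosh(x)^{n−d}. -/

import Mathlib

open SimpleGraph Finset

/-- The `n`-dimensional hypercube graph: vertices are `{0,1}^n`, two vertices being adjacent
iff they differ in exactly one coordinate (Hamming distance `1`). -/
def cubeGraph (n : ℕ) : SimpleGraph (Fin n → Bool) where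
  Adj u v := hammingDist u v = 1
  symm := ⟨by intro u v h; rwa [hammingDist_comm]⟩
  loopless := ⟨by intro u h; simp [hammingDist_self] at h⟩

/-- The number of walks of length `l` from `u` to `v` in the `n`-dimensional hypercube. -/
noncomputable def walkCount (n l : ℕ) (u v : Fin n → Bool) : ℕ :=
  Nat.card {p : (cubeGraph n).Walk u v // p.length = l}

instance (n : ℕ) : DecidableRel (cubeGraph n).Adj :=
  fun u v => inferInstanceAs (Decidable (hammingDist u v = 1))

namespace StanleyAux

variable {n : ℕ}

/-- The character of `(ℤ/2)^n` associated to a subset `S` of coordinates. -/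
noncomputable def chi (S : Finset (Fin n)) (u : Fin n → Bool) : ℝ :=
  ∏ i ∈ S, (if u i then -1 else 1)

lemma chi_mul (S : Finset (Fin n)) (u v : Fin n → Bool) :
    chi S u * chi S v = ∏ i ∈ S, (if u i = v i then (1:ℝ) else -1) := by
  rw [chi, chi, ← prod_mul_distrib]
  refine prod_congr rfl fun i _ => ?_
  cases h : u i <;> cases h' : v i <;> norm_num

lemma adj_iff (u w : Fin n → Bool) :
    (cubeGraph n).Adj u w ↔ ∃ i, w = Function.update u i (!u i) := by
  show hammingDist u w = 1 ↔ _
  unfold hammingDist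
  rw [Finset.card_eq_one]
  constructor
  · rintro ⟨i, hi⟩
    refine ⟨i, funext fun j => ?_⟩
    rcases eq_or_ne j i with rfl | hj
    · have : j ∈ ({j} : Finset (Fin n)) := mem_singleton_self j
      rw [← hi, mem_filter] at this
      have := this.2
      rw [Function.update_self]
      cases hu : u j <;> cases hw : w j <;> simp_all
    · have : j ∉ ({i} : Finset (Fin n)) := by simpa using hj
      rw [← hi, mem_filter] at this
      push_neg at this
      have := this (mem_univ j)
      rw [Function.update_of_ne hj]
      exact this.symm
  · rintro ⟨i, rfl⟩
    refine ⟨i, ?_⟩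
    ext j
    simp only [mem_filter, mem_univ, true_and, mem_singleton]
    rcases eq_or_ne j i with rfl | hj
    · simp [Function.update_self]
    · simp [Function.update_of_ne hj, hj]

lemma flip_inj (u : Fin n → Bool) :
    Function.Injective (fun i => Function.update u i (!u i)) := by
  intro i j h
  by_contra hij
  have := congrFun h i
  simp only [Function.update_self] at this
  rw [Function.update_of_ne hij] at this
  exact (Bool.not_ne_self (u i)) (by simp [this])

lemma chi_update (S : Finset (Fin n)) (u : Fin n → Bool) (i : Fin n) :
    chi S (Function.update u i (!u i)) = (if i ∈ S then -1 else 1) * chi S u := by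
  unfold chi
  by_cases hi : i ∈ S
  · rw [if_pos hi]
    have key : ∀ j ∈ S, (if Function.update u i (!u i) j then (-1:ℝ) else 1)
        = Function.update (fun j => if u j then (-1:ℝ) else 1) i (if !u i then -1 else 1) j := by
      intro j _
      rcases eq_or_ne j i with rfl | hj
      · simp
      · simp [Function.update_of_ne hj]
    rw [prod_congr rfl key, Finset.prod_update_of_mem hi]
    rw [← Finset.mul_prod_erase S _ hi, ← Finset.erase_eq]
    have : (if !u i then (-1:ℝ) else 1) = -1 * (if u i then -1 else 1) := by
      cases h : u i <;> norm_num
    rw [this]; ring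
  · rw [if_neg hi, one_mul]
    refine prod_congr rfl fun j hj => ?_
    have : j ≠ i := fun h => hi (h ▸ hj)
    rw [Function.update_of_ne this]

lemma eigen (S : Finset (Fin n)) (u : Fin n → Bool) :
    ∑ w : Fin n → Bool, (if (cubeGraph n).Adj u w then chi S w else 0)
      = ((n:ℝ) - 2 * S.card) * chi S u := by
  have hfilt : (univ.filter fun w => (cubeGraph n).Adj u w)
      = Finset.image (fun i => Function.update u i (!u i)) univ := by
    ext w
    simp only [mem_filter, mem_univ, true_and, mem_image]
    rw [adj_iff]
    constructor
    · rintro ⟨i, rfl⟩; exact ⟨i, rfl⟩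
    · rintro ⟨i, rfl⟩; exact ⟨i, rfl⟩
  rw [← Finset.sum_filter, hfilt,
    Finset.sum_image (fun i _ j _ h => flip_inj u h)]
  have : ∀ i ∈ (univ : Finset (Fin n)), chi S (Function.update u i (!u i))
      = (if i ∈ S then (-1:ℝ) else 1) * chi S u := fun i _ => chi_update S u i
  rw [Finset.sum_congr rfl this, ← Finset.sum_mul]
  congr 1
  have h1 : univ.filter (· ∈ S) = S := by simp
  have hle : S.card ≤ n := by
    simpa using Finset.card_le_card (Finset.subset_univ S)
  have h2 : (univ.filter (fun i => i ∉ S)).card = n - S.card := by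
    rw [Finset.filter_not, h1, Finset.card_sdiff_of_subset (Finset.subset_univ S)]
    simp
  rw [Finset.sum_ite, h1, Finset.sum_const, Finset.sum_const, h2]
  simp only [nsmul_eq_mul, mul_one, mul_neg_one, Nat.cast_sub hle]
  ring

lemma orthog (u v : Fin n → Bool) :
    ∑ S : Finset (Fin n), chi S u * chi S v = if u = v then (2:ℝ)^n else 0 := by
  have expand := Finset.prod_add (fun i : Fin n => if u i = v i then (1:ℝ) else -1)
    (fun _ => (1:ℝ)) univ
  simp only [prod_const_one, mul_one, Finset.powerset_univ] at expand
  rw [Finset.sum_congr rfl fun S _ => chi_mul S u v, ← expand]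
  by_cases h : u = v
  · subst h
    simp only [if_pos rfl, if_true]
    rw [Finset.prod_const]
    norm_num
  · rw [if_neg h]
    obtain ⟨i, hi⟩ : ∃ i, u i ≠ v i := by
      by_contra hc; push_neg at hc; exact h (funext hc)
    apply Finset.prod_eq_zero (mem_univ i)
    rw [if_neg hi]; norm_num

lemma matrix_formula (l : ℕ) (u v : Fin n → Bool) :
    ((cubeGraph n).adjMatrix ℝ ^ l) u v
      = ((2:ℝ)^n)⁻¹ * ∑ S : Finset (Fin n), chi S u * chi S v * ((n:ℝ) - 2 * S.card)^l := by
  induction l generalizing u with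
  | zero =>
    simp only [pow_zero, Matrix.one_apply, mul_one]
    rw [orthog u v]
    by_cases h : u = v <;> simp [h]
  | succ l ih =>
    rw [pow_succ', Matrix.mul_apply]
    simp only [adjMatrix_apply, ih, boole_mul]
    calc (∑ w : Fin n → Bool, if (cubeGraph n).Adj u w then
            (2^n)⁻¹ * ∑ S : Finset (Fin n), chi S w * chi S v * ((n:ℝ) - 2 * S.card)^l else 0)
        = ∑ w : Fin n → Bool, ∑ S : Finset (Fin n),
            ((2:ℝ)^n)⁻¹ * chi S v * ((n:ℝ) - 2 * S.card)^l
              * (if (cubeGraph n).Adj u w then chi S w else 0) := by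
          refine Finset.sum_congr rfl fun w _ => ?_
          split_ifs with h
          · rw [Finset.mul_sum]; exact Finset.sum_congr rfl fun S _ => by ring
          · simp
      _ = ∑ S : Finset (Fin n), ∑ w : Fin n → Bool,
            ((2:ℝ)^n)⁻¹ * chi S v * ((n:ℝ) - 2 * S.card)^l
              * (if (cubeGraph n).Adj u w then chi S w else 0) := Finset.sum_comm
      _ = ∑ S : Finset (Fin n), ((2:ℝ)^n)⁻¹ * chi S v * ((n:ℝ) - 2 * S.card)^l
              * (((n:ℝ) - 2 * S.card) * chi S u) := by
          refine Finset.sum_congr rfl fun S _ => ?_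
          rw [← Finset.mul_sum, eigen]
      _ = ((2:ℝ)^n)⁻¹ * ∑ S : Finset (Fin n),
            chi S u * chi S v * ((n:ℝ) - 2 * S.card)^(l+1) := by
          rw [Finset.mul_sum]
          exact Finset.sum_congr rfl fun S _ => by ring

lemma walkCount_cast (l : ℕ) (u v : Fin n → Bool) :
    (walkCount n l u v : ℝ) = ((cubeGraph n).adjMatrix ℝ ^ l) u v := by
  rw [adjMatrix_pow_apply_eq_card_walk, walkCount]
  norm_cast
  exact Nat.card_eq_fintype_card

lemma rhs_identity (d : ℕ) (hd : d ≤ n) (u v : Fin n → Bool)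
    (huv : hammingDist u v = d) (x : ℝ) :
    Real.sinh x ^ d * Real.cosh x ^ (n - d)
      = ∑ S : Finset (Fin n),
          ((2:ℝ)^n)⁻¹ * (chi S u * chi S v) * Real.exp (((n:ℝ) - 2 * S.card) * x) := by
  have hcard : (univ.filter fun i => ¬ (u i = v i)).card = d := by
    rw [← huv]; rfl
  have step1 : Real.sinh x ^ d * Real.cosh x ^ (n - d)
      = ∏ i : Fin n, (if u i = v i then Real.cosh x else Real.sinh x) := by
    have hc2 : (univ.filter fun i => u i = v i).card = n - d := by
      have := Finset.card_filter_add_card_filter_not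
        (s := (univ : Finset (Fin n))) (p := fun i => u i = v i)
      rw [hcard, Finset.card_univ, Fintype.card_fin] at this
      omega
    rw [← Finset.prod_filter_mul_prod_filter_not univ (fun i => u i = v i)]
    have e1 : (∏ i ∈ univ.filter (fun i => u i = v i),
        (if u i = v i then Real.cosh x else Real.sinh x)) = Real.cosh x ^ (n - d) := by
      rw [Finset.prod_congr rfl (fun i hi => if_pos (Finset.mem_filter.mp hi).2),
        Finset.prod_const, hc2]
    have e2 : (∏ i ∈ univ.filter (fun i => ¬ (u i = v i)),
        (if u i = v i then Real.cosh x else Real.sinh x)) = Real.sinh x ^ d := by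
      rw [Finset.prod_congr rfl (fun i hi => if_neg (Finset.mem_filter.mp hi).2),
        Finset.prod_const, hcard]
    rw [e1, e2, mul_comm]
  rw [step1]
  have step2 : ∀ i : Fin n, (if u i = v i then Real.cosh x else Real.sinh x)
      = ((if u i = v i then (1:ℝ) else -1) * Real.exp (-x) + Real.exp x) / 2 := by
    intro i
    split_ifs with h
    · rw [Real.cosh_eq]; ring
    · rw [Real.sinh_eq]; ring
  rw [Finset.prod_congr rfl fun i _ => step2 i, Finset.prod_div_distrib,
    Finset.prod_const, Finset.prod_add, Finset.powerset_univ]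
  rw [Finset.sum_div]
  refine Finset.sum_congr rfl fun S _ => ?_
  have hSle : S.card ≤ n := by simpa using Finset.card_le_card (Finset.subset_univ S)
  rw [Finset.prod_mul_distrib, Finset.prod_const, Finset.prod_const, ← chi_mul]
  have hcards : (univ \ S).card = n - S.card := by
    rw [Finset.card_sdiff_of_subset (Finset.subset_univ S)]; simp
  rw [hcards, ← Real.exp_nat_mul, ← Real.exp_nat_mul]
  have hc : ((n - S.card : ℕ) : ℝ) = (n : ℝ) - S.card := by
    rw [Nat.cast_sub hSle]
  rw [hc, mul_assoc (chi S u * chi S v), ← Real.exp_add]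
  have hexp : (S.card : ℝ) * (-x) + ((n:ℝ) - S.card) * x = ((n:ℝ) - 2 * S.card) * x := by ring
  rw [hexp]
  have h2 : ((2:ℝ)) ^ (univ : Finset (Fin n)).card = 2 ^ n := by simp
  rw [h2, div_eq_mul_inv]
  ring

lemma exp_tsum (y : ℝ) : ∑' l : ℕ, y ^ l / (l.factorial : ℝ) = Real.exp y := by
  rw [Real.exp_eq_exp_ℝ, NormedSpace.exp_eq_tsum_div]

end StanleyAux

open StanleyAux in
/-- **Stanley's identity**: for vertices `u, v` of `Q_n` at Hamming distance `d ≤ n`, the series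
`Σ_{l=0}^{∞} M_{n,l,d} · x^l / l!` converges absolutely for every real `x` and its sum equals
`sinh(x)^d · cosh(x)^{n−d}`, where `M_{n,l,d}` is the number of walks of length `l`
from `u` to `v`. -/
theorem stanley_identity (n d : ℕ) (hd : d ≤ n) (u v : Fin n → Bool)
    (huv : hammingDist u v = d) (x : ℝ) :
    (Summable fun l : ℕ => |(walkCount n l u v : ℝ) * x ^ l / (l.factorial : ℝ)|) ∧
      ∑' l : ℕ, (walkCount n l u v : ℝ) * x ^ l / (l.factorial : ℝ) =
        Real.sinh x ^ d * Real.cosh x ^ (n - d) := by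
  set c : Finset (Fin n) → ℝ := fun S => ((2:ℝ)^n)⁻¹ * (chi S u * chi S v) with hc
  set lam : Finset (Fin n) → ℝ := fun S => (n:ℝ) - 2 * S.card with hlam
  have hf : ∀ l : ℕ, (walkCount n l u v : ℝ) * x ^ l / (l.factorial : ℝ)
      = ∑ S : Finset (Fin n), c S * (lam S * x) ^ l / (l.factorial : ℝ) := by
    intro l
    rw [walkCount_cast, matrix_formula, Finset.mul_sum, Finset.sum_mul, Finset.sum_div]
    refine Finset.sum_congr rfl fun S _ => ?_
    rw [mul_pow]
    ring
  have hg : ∀ S : Finset (Fin n),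
      Summable fun l : ℕ => c S * (lam S * x) ^ l / (l.factorial : ℝ) := by
    intro S
    simpa [mul_div_assoc] using (Real.summable_pow_div_factorial (lam S * x)).mul_left (c S)
  have hgabs : ∀ S : Finset (Fin n),
      Summable fun l : ℕ => |c S * (lam S * x) ^ l / (l.factorial : ℝ)| := by
    intro S
    refine ((Real.summable_pow_div_factorial |lam S * x|).mul_left |c S|).congr fun l => ?_
    rw [abs_div, abs_mul (c S) ((lam S * x) ^ l), abs_pow, Nat.abs_cast, mul_div_assoc]
  have hsumabs : Summable fun l : ℕ =>
      ∑ S : Finset (Fin n), |c S * (lam S * x) ^ l / (l.factorial : ℝ)| :=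
    summable_sum fun S _ => hgabs S
  have habs : Summable fun l : ℕ => |(walkCount n l u v : ℝ) * x ^ l / (l.factorial : ℝ)| := by
    refine Summable.of_nonneg_of_le (fun l => abs_nonneg _) (fun l => ?_) hsumabs
    rw [hf l]
    exact Finset.abs_sum_le_sum_abs _ _
  refine ⟨habs, ?_⟩
  calc ∑' l : ℕ, (walkCount n l u v : ℝ) * x ^ l / (l.factorial : ℝ)
      = ∑' l : ℕ, ∑ S : Finset (Fin n), c S * (lam S * x) ^ l / (l.factorial : ℝ) :=
        tsum_congr hf
    _ = ∑ S : Finset (Fin n), ∑' l : ℕ, c S * (lam S * x) ^ l / (l.factorial : ℝ) :=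
        Summable.tsum_finsetSum fun S _ => hg S
    _ = ∑ S : Finset (Fin n), c S * Real.exp (lam S * x) := by
        refine Finset.sum_congr rfl fun S _ => ?_
        have : ∀ l : ℕ, c S * (lam S * x) ^ l / (l.factorial : ℝ)
            = c S * ((lam S * x) ^ l / (l.factorial : ℝ)) := fun l => by ring
        rw [tsum_congr this, tsum_mul_left, exp_tsum]
    _ = Real.sinh x ^ d * Real.cosh x ^ (n - d) := (rhs_identity d hd u v huv x).symm
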